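/- Let ℓ ≥ 1 and A ∈ GL₂(𝔬_ℓ). Then A is real in GL₂(𝔬_ℓ) if and only if A is conjugate in GL₂(𝔬_ℓ) to a matrix of one of the following forms: (a) [[0,1],[1,0]]; (b) [[0,−1],[1,β]] for some β ∈ 𝔬_ℓ; (c) I + π^i·[[0,α],[1,π^i α]] for some 1 ≤ i ≤ ℓ and α ∈ 𝔬_ℓ; (d) −I + π^i·[[0,α],[1,−π^i α]] for some 1 ≤ i ≤ ℓ and α ∈ 𝔬_ℓ (here π^ℓ = 0 in 𝔬_ℓ, so i = ℓ yields ±I). -/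

import Mathlib

open Matrix


section AuxLemmas
variable {R : Type} [CommRing R]

private lemma aux_CH (M N : Matrix (Fin 2) (Fin 2) R) (h1 : M * N = 1) :
    M.det • N = M.trace • (1 : Matrix (Fin 2) (Fin 2) R) - M := by
  have key : M * (M.trace • (1 : Matrix (Fin 2) (Fin 2) R) - M) = M.det • 1 := by
    ext i j
    fin_cases i <;> fin_cases j <;>
      simp [Matrix.mul_apply, Fin.sum_univ_two, Matrix.det_fin_two, Matrix.trace_fin_two,
        Matrix.one_apply] <;> ring
  have h2 : N * M = 1 := mul_eq_one_comm.mp h1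
  calc M.det • N = N * (M.det • (1 : Matrix (Fin 2) (Fin 2) R)) := by
        rw [Matrix.mul_smul, Matrix.mul_one]
    _ = N * (M * (M.trace • (1 : Matrix (Fin 2) (Fin 2) R) - M)) := by rw [key]
    _ = (N * M) * (M.trace • (1 : Matrix (Fin 2) (Fin 2) R) - M) := by rw [Matrix.mul_assoc]
    _ = M.trace • (1 : Matrix (Fin 2) (Fin 2) R) - M := by rw [h2, Matrix.one_mul]

private lemma aux_trace_conj (M P Q : Matrix (Fin 2) (Fin 2) R) (h : P * Q = 1) :
    (Q * M * P).trace = M.trace := by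
  rw [Matrix.trace_mul_comm, ← Matrix.mul_assoc, h, Matrix.one_mul]

private lemma aux_det_conj (M P Q : Matrix (Fin 2) (Fin 2) R) (h : P * Q = 1) :
    (Q * M * P).det = M.det := by
  have h' := congrArg Matrix.det h
  rw [Matrix.det_mul, Matrix.det_one] at h'
  rw [Matrix.det_mul, Matrix.det_mul]
  calc Q.det * M.det * P.det = M.det * (P.det * Q.det) := by ring
    _ = M.det := by rw [h', mul_one]

private lemma aux_back (A g : GL (Fin 2) R) (h Nv : Matrix (Fin 2) (Fin 2) R)
    (hNv : (↑(g * A * g⁻¹) : Matrix (Fin 2) (Fin 2) R) = Nv) (hh : h * h = 1)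
    (hs : h * Nv * h * Nv = 1) : IsConj A A⁻¹ := by
  set N := g * A * g⁻¹ with hN
  let H : GL (Fin 2) R := ⟨h, h, hh, hh⟩
  have e1 : (H * N * H) * N = 1 := by
    apply Units.ext
    show h * (N : Matrix (Fin 2) (Fin 2) R) * h * (N : Matrix (Fin 2) (Fin 2) R) = 1
    rw [hN, hNv]; exact hs
  have e2 : H * N * H = N⁻¹ := eq_inv_of_mul_eq_one_left e1
  have hH2 : H * H = 1 := Units.ext hh
  have hHinv : H⁻¹ = H := inv_eq_of_mul_eq_one_right hH2
  have conjN : IsConj N N⁻¹ := by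
    rw [isConj_iff]
    exact ⟨H, by rw [hHinv, e2]⟩
  have c1 : IsConj A N := by rw [isConj_iff]; exact ⟨g, rfl⟩
  have c2 : IsConj A⁻¹ N⁻¹ := by
    rw [isConj_iff]
    exact ⟨g, by rw [hN]; simp [_root_.mul_inv_rev, mul_assoc]⟩
  exact c1.trans (conjN.trans c2.symm)

variable {p : R}

private lemma aux_unit_add (hH1 : ∀ x : R, IsUnit x ∨ ∃ y, x = p * y) (hpnu : ¬ IsUnit p)
    {x : R} (y : R) (hx : IsUnit x) : IsUnit (x + p * y) := by
  rcases hH1 (x + p * y) with h | ⟨z, hz⟩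
  · exact h
  · exfalso
    apply hpnu
    have hxe : x = p * (z - y) := by rw [mul_sub, ← hz]; ring
    rw [hxe] at hx
    exact isUnit_of_mul_isUnit_left hx

private lemma aux_cyc (hH1 : ∀ x : R, IsUnit x ∨ ∃ y, x = p * y) (hpnu : ¬ IsUnit p)
    (B : Matrix (Fin 2) (Fin 2) R)
    (hns : ¬ ∃ (c : R) (B' : Matrix (Fin 2) (Fin 2) R),
        B = c • (1 : Matrix (Fin 2) (Fin 2) R) + p • B') :
    ∃ P Q : Matrix (Fin 2) (Fin 2) R,
      P * Q = 1 ∧ Q * P = 1 ∧ Q * B * P = !![0, -B.det; 1, B.trace] := by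
  set a := B 0 0 with ha
  set b := B 0 1 with hb
  set c := B 1 0 with hc
  set d := B 1 1 with hd
  have hBeta : B = !![a, b; c, d] := Matrix.eta_fin_two B
  have hdet : B.det = a * d - b * c := by rw [Matrix.det_fin_two]
  have htr : B.trace = a + d := by rw [Matrix.trace_fin_two]
  have key : ∀ P : Matrix (Fin 2) (Fin 2) R, IsUnit P.det →
      B * P = P * !![0, -B.det; 1, B.trace] →
      ∃ P Q : Matrix (Fin 2) (Fin 2) R,
        P * Q = 1 ∧ Q * P = 1 ∧ Q * B * P = !![0, -B.det; 1, B.trace] := by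
    intro P hPu hBP
    obtain ⟨u, hu⟩ := hPu.exists_right_inv
    refine ⟨P, u • P.adjugate, ?_, ?_, ?_⟩
    · rw [Matrix.mul_smul, Matrix.mul_adjugate, smul_smul, mul_comm u, hu, one_smul]
    · rw [Matrix.smul_mul, Matrix.adjugate_mul, smul_smul, mul_comm u, hu, one_smul]
    · have h2 : (u • P.adjugate) * P = 1 := by
        rw [Matrix.smul_mul, Matrix.adjugate_mul, smul_smul, mul_comm u, hu, one_smul]
      rw [Matrix.mul_assoc, hBP, ← Matrix.mul_assoc, h2, Matrix.one_mul]
  rcases hH1 c with hcu | ⟨y, hy⟩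
  · refine key !![1, a; 0, c] ?_ ?_
    · rw [Matrix.det_fin_two_of]; simpa using hcu
    · rw [hdet, htr, hBeta]
      ext i j
      fin_cases i <;> fin_cases j <;>
        simp [Matrix.mul_apply, Fin.sum_univ_two] <;> ring
  rcases hH1 b with hbu | ⟨x, hx⟩
  · refine key !![0, b; 1, d] ?_ ?_
    · rw [Matrix.det_fin_two_of]
      simpa using hbu.neg
    · rw [hdet, htr, hBeta]
      ext i j
      fin_cases i <;> fin_cases j <;>
        simp [Matrix.mul_apply, Fin.sum_univ_two] <;> ring
  have hda : IsUnit (d - a) := by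
    rcases hH1 (d - a) with h | ⟨z, hz⟩
    · exact h
    · exfalso
      apply hns
      refine ⟨a, !![0, x; y, z], ?_⟩
      rw [hBeta]
      ext i j
      fin_cases i <;> fin_cases j <;>
        simp [Matrix.one_apply] <;>
          first
          | rfl
          | exact hx
          | exact hy
          | linear_combination hz
  · refine key !![1, a + b; 1, c + d] ?_ ?_
    · rw [Matrix.det_fin_two_of]
      have hrw : 1 * (c + d) - (a + b) * 1 = (d - a) + p * (y - x) := by
        rw [hx, hy]; ring
      rw [hrw]
      exact aux_unit_add hH1 hpnu _ hda
    · rw [hdet, htr, hBeta]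
      ext i j
      fin_cases i <;> fin_cases j <;>
        simp [Matrix.mul_apply, Fin.sum_univ_two] <;> ring

private lemma aux_detexp (c q : R) (B : Matrix (Fin 2) (Fin 2) R) :
    (c • (1 : Matrix (Fin 2) (Fin 2) R) + q • B).det
      = c * c + q * (c * B.trace + q * B.det) := by
  simp [Matrix.det_fin_two, Matrix.trace_fin_two, Matrix.add_apply, Matrix.smul_apply,
    Matrix.one_apply]
  ring

private lemma aux_trexp (c q : R) (B : Matrix (Fin 2) (Fin 2) R) :
    (c • (1 : Matrix (Fin 2) (Fin 2) R) + q • B).trace = 2 * c + q * B.trace := by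
  simp [Matrix.trace_fin_two, Matrix.add_apply, Matrix.smul_apply, Matrix.one_apply]
  ring

private lemma aux_sq (hH1 : ∀ x : R, IsUnit x ∨ ∃ y, x = p * y) (hpnu : ¬ IsUnit p)
    (h2u : IsUnit (2 : R)) (x : R) (hx2 : x * x = 1) : x = 1 ∨ x = -1 := by
  rcases hH1 (x - 1) with hu | ⟨y, hy⟩
  · right
    obtain ⟨v, hv⟩ := hu.exists_right_inv
    have h0 : x + 1 = 0 := by linear_combination (-(x+1)) * hv + v * hx2
    linear_combination h0
  · left
    have hxu : IsUnit (x + 1) := by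
      have hrw : x + 1 = 2 + p * y := by linear_combination hy
      rw [hrw]
      exact aux_unit_add hH1 hpnu y h2u
    obtain ⟨v, hv⟩ := hxu.exists_right_inv
    have h0 : x - 1 = 0 := by linear_combination (-(x-1)) * hv + v * hx2
    linear_combination h0

private lemma aux_main_c (hH1 : ∀ x : R, IsUnit x ∨ ∃ y, x = p * y) (hpnu : ¬ IsUnit p)
    (h2u : IsUnit (2 : R)) (ℓ : ℕ) (hℓ : 1 ≤ ℓ) (hH2 : p ^ ℓ = 0)
    (A : GL (Fin 2) R) (hdet : (↑A : Matrix (Fin 2) (Fin 2) R).det = 1)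
    (B₀ : Matrix (Fin 2) (Fin 2) R)
    (h0 : (↑A : Matrix (Fin 2) (Fin 2) R) = 1 + p • B₀) :
    ∃ (g : GL (Fin 2) R) (i : ℕ) (α : R), 1 ≤ i ∧ i ≤ ℓ ∧
      (↑(g * A * g⁻¹) : Matrix (Fin 2) (Fin 2) R)
        = 1 + p ^ i • !![0, α; 1, p ^ i * α] := by
  classical
  set S : ℕ → Prop := fun j => ∃ (c : R) (B : Matrix (Fin 2) (Fin 2) R),
      (↑A : Matrix (Fin 2) (Fin 2) R) = c • 1 + p ^ j • B with hS
  have hS1 : S 1 := ⟨1, B₀, by rw [pow_one, one_smul]; exact h0⟩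
  set i := Nat.findGreatest S ℓ with hidef
  have hSi : S i := Nat.findGreatest_spec hℓ hS1
  have hi1 : 1 ≤ i := Nat.le_findGreatest hℓ hS1
  have hiℓ : i ≤ ℓ := Nat.findGreatest_le ℓ
  have hmax : ∀ k, i < k → k ≤ ℓ → ¬ S k := fun k hk hk' => Nat.findGreatest_is_greatest hk hk'
  clear_value i
  obtain ⟨c, B, hAB⟩ := hSi
  by_cases hcase : ℓ ≤ i
  · have hieq : i = ℓ := le_antisymm hiℓ hcase
    have hz : p ^ i • B = 0 := by rw [hieq, hH2, zero_smul]
    have hAc : (↑A : Matrix (Fin 2) (Fin 2) R) = c • 1 := by rw [hAB, hz, add_zero]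
    have hc2 : c * c = 1 := by
      have h1 := aux_detexp c (0 : R) B
      have h2 : (↑A : Matrix (Fin 2) (Fin 2) R).det = c * c := by
        rw [hAc]
        have h3 : c • (1 : Matrix (Fin 2) (Fin 2) R) = c • 1 + (0:R) • B := by
          rw [zero_smul, add_zero]
        rw [h3, h1]; ring
      rw [h2] at hdet; exact hdet
    rcases aux_sq hH1 hpnu h2u c hc2 with hc | hc
    · refine ⟨1, ℓ, 0, hℓ, le_refl ℓ, ?_⟩
      have h1 : (1 : GL (Fin 2) R) * A * 1⁻¹ = A := by group
      rw [h1, hAc, hc, one_smul, hH2, zero_smul, add_zero]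
    · exfalso
      have he : (c • (1 : Matrix (Fin 2) (Fin 2) R)) 0 0
          = (1 + p • B₀) 0 0 := by rw [← hAc, ← h0]
      simp [Matrix.add_apply, Matrix.smul_apply, Matrix.one_apply, hc] at he
      apply hpnu
      have h2 : (2 : R) = p * (-(B₀ 0 0)) := by linear_combination -he
      rw [h2] at h2u
      exact isUnit_of_mul_isUnit_left h2u
  · push_neg at hcase
    obtain ⟨i', rfl⟩ : ∃ i', i = i' + 1 := ⟨i - 1, (Nat.succ_pred_eq_of_pos hi1).symm⟩
    have hc1 : ∃ e : R, c = 1 + p * e := by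
      have he : (c • (1 : Matrix (Fin 2) (Fin 2) R) + p ^ (i'+1) • B) 0 0
          = (1 + p • B₀) 0 0 := by rw [← hAB, ← h0]
      simp [Matrix.add_apply, Matrix.smul_apply, Matrix.one_apply] at he
      refine ⟨B₀ 0 0 - p ^ i' * B 0 0, ?_⟩
      rw [pow_succ] at he
      linear_combination he
    obtain ⟨e, he⟩ := hc1
    have hcu : IsUnit (c + 1) := by
      have hrw : c + 1 = 2 + p * e := by rw [he]; ring
      rw [hrw]; exact aux_unit_add hH1 hpnu e h2u
    obtain ⟨v, hv⟩ := hcu.exists_right_inv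
    have hdet2 : c * c + p ^ (i'+1) * (c * B.trace + p ^ (i'+1) * B.det) = 1 := by
      rw [← aux_detexp, ← hAB]; exact hdet
    set w : R := -(v * (c * B.trace + p ^ (i'+1) * B.det)) with hw
    have hcw : c = 1 + p ^ (i'+1) * w := by
      rw [hw]
      linear_combination (-(c-1)) * hv + v * hdet2
    set B₁ : Matrix (Fin 2) (Fin 2) R := w • 1 + B with hB₁
    have hA1 : (↑A : Matrix (Fin 2) (Fin 2) R) = 1 + p ^ (i'+1) • B₁ := by
      rw [hAB, hcw, hB₁]
      ext ii jj
      fin_cases ii <;> fin_cases jj <;>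
        simp [Matrix.add_apply, Matrix.smul_apply, Matrix.one_apply] <;> ring
    have hB₁ns : ¬ ∃ (c' : R) (B' : Matrix (Fin 2) (Fin 2) R),
        B₁ = c' • (1 : Matrix (Fin 2) (Fin 2) R) + p • B' := by
      rintro ⟨c', B', hB'⟩
      refine hmax (i'+1+1) (lt_add_one (i'+1)) (by omega) ?_
      refine ⟨1 + p ^ (i'+1) * c', B', ?_⟩
      rw [hA1, hB']
      ext ii jj
      fin_cases ii <;> fin_cases jj <;>
        simp [Matrix.add_apply, Matrix.smul_apply, Matrix.one_apply, pow_succ] <;> ring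
    obtain ⟨P, Q, hPQ, hQP, hcomp⟩ := aux_cyc hH1 hpnu B₁ hB₁ns
    refine ⟨⟨Q, P, hQP, hPQ⟩, i'+1, -B₁.det, hi1, hiℓ, ?_⟩
    have hEval : (↑((⟨Q, P, hQP, hPQ⟩ : GL (Fin 2) R) * A * (⟨Q, P, hQP, hPQ⟩ : GL (Fin 2) R)⁻¹)
        : Matrix (Fin 2) (Fin 2) R) = Q * (↑A : Matrix (Fin 2) (Fin 2) R) * P := rfl
    have hE : Q * (↑A : Matrix (Fin 2) (Fin 2) R) * P
        = 1 + p ^ (i'+1) • !![0, -B₁.det; 1, B₁.trace] := by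
      rw [hA1, Matrix.mul_add, Matrix.mul_one, Matrix.add_mul, hQP, Matrix.mul_smul,
        Matrix.smul_mul, hcomp]
    have hd3 : (1 + p ^ (i'+1) • !![(0:R), -B₁.det; 1, B₁.trace]).det = 1 := by
      rw [← hE]
      have h4 := congrArg Matrix.det hPQ
      rw [Matrix.det_mul, Matrix.det_one] at h4
      rw [Matrix.det_mul, Matrix.det_mul]
      calc Q.det * (↑A : Matrix (Fin 2) (Fin 2) R).det * P.det
          = (↑A : Matrix (Fin 2) (Fin 2) R).det * (P.det * Q.det) := by ring
        _ = 1 := by rw [h4, mul_one, hdet]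
    have hkey : p ^ (i'+1) * B₁.trace = p ^ (i'+1) * (p ^ (i'+1) * (-B₁.det)) := by
      rw [Matrix.det_fin_two] at hd3
      simp [Matrix.add_apply, Matrix.smul_apply, Matrix.one_apply] at hd3
      linear_combination hd3
    rw [hEval, hE]
    congr 1
    ext ii jj
    fin_cases ii <;> fin_cases jj <;>
      simp [Matrix.smul_apply]
    linear_combination hkey

end AuxLemmas

set_option maxHeartbeats 1000000

theorem real_classes_GL2
    (O : Type) [CommRing O] [IsDomain O] [IsDiscreteValuationRing O]
    [IsAdicComplete (IsLocalRing.maximalIdeal O) O]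
    (π : O) (hπ : IsLocalRing.maximalIdeal O = Ideal.span {π})
    [Finite (IsLocalRing.ResidueField O)]
    (hodd : Odd (ringChar (IsLocalRing.ResidueField O)))
    (ℓ : ℕ) (hℓ : 1 ≤ ℓ)
    (A : GL (Fin 2) (O ⧸ Ideal.span {π} ^ ℓ)) :
    IsConj A A⁻¹ ↔
      ∃ g : GL (Fin 2) (O ⧸ Ideal.span {π} ^ ℓ),
        -- (a)
        ((↑(g * A * g⁻¹) : Matrix (Fin 2) (Fin 2) (O ⧸ Ideal.span {π} ^ ℓ)) =
            !![0, 1; 1, 0]) ∨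
        -- (b)
        (∃ β : O ⧸ Ideal.span {π} ^ ℓ,
          (↑(g * A * g⁻¹) : Matrix (Fin 2) (Fin 2) (O ⧸ Ideal.span {π} ^ ℓ)) =
            !![0, -1; 1, β]) ∨
        -- (c)
        (∃ i : ℕ, 1 ≤ i ∧ i ≤ ℓ ∧ ∃ α : O ⧸ Ideal.span {π} ^ ℓ,
          (↑(g * A * g⁻¹) : Matrix (Fin 2) (Fin 2) (O ⧸ Ideal.span {π} ^ ℓ)) =
            1 + (Ideal.Quotient.mk (Ideal.span {π} ^ ℓ) π) ^ i •
              !![0, α; 1, (Ideal.Quotient.mk (Ideal.span {π} ^ ℓ) π) ^ i * α]) ∨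
        -- (d)
        (∃ i : ℕ, 1 ≤ i ∧ i ≤ ℓ ∧ ∃ α : O ⧸ Ideal.span {π} ^ ℓ,
          (↑(g * A * g⁻¹) : Matrix (Fin 2) (Fin 2) (O ⧸ Ideal.span {π} ^ ℓ)) =
            -1 + (Ideal.Quotient.mk (Ideal.span {π} ^ ℓ) π) ^ i •
              !![0, α; 1, -((Ideal.Quotient.mk (Ideal.span {π} ^ ℓ) π) ^ i * α)]) := by
  classical
  set p : O ⧸ Ideal.span {π} ^ ℓ := Ideal.Quotient.mk (Ideal.span {π} ^ ℓ) π with hp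
  -- basic facts about the quotient ring
  have hne : Ideal.span {π} ^ ℓ ≠ ⊤ := by
    intro h
    have h1 : Ideal.span {π} ^ ℓ ≤ Ideal.span {π} := Ideal.pow_le_self (by omega)
    rw [h] at h1
    have h2 : Ideal.span {π} = ⊤ := top_le_iff.mp h1
    rw [← hπ] at h2
    exact (IsLocalRing.maximalIdeal.isMaximal O).ne_top h2
  haveI hnt : Nontrivial (O ⧸ Ideal.span {π} ^ ℓ) := Ideal.Quotient.nontrivial_iff.mpr hne
  have hH2 : p ^ ℓ = 0 := by
    rw [hp, ← map_pow, Ideal.Quotient.eq_zero_iff_mem]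
    exact Ideal.pow_mem_pow (Ideal.subset_span (Set.mem_singleton π)) ℓ
  have hH1 : ∀ x : O ⧸ Ideal.span {π} ^ ℓ, IsUnit x ∨ ∃ y, x = p * y := by
    intro x
    obtain ⟨a, rfl⟩ := Ideal.Quotient.mk_surjective x
    by_cases ha : a ∈ IsLocalRing.maximalIdeal O
    · right
      rw [hπ, Ideal.mem_span_singleton] at ha
      obtain ⟨b, rfl⟩ := ha
      exact ⟨Ideal.Quotient.mk _ b, by rw [_root_.map_mul]⟩
    · left
      have h3 : IsUnit a := by
        rwa [IsLocalRing.mem_maximalIdeal, mem_nonunits_iff, not_not] at ha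
      exact h3.map (Ideal.Quotient.mk _)
  have h2u : IsUnit (2 : O ⧸ Ideal.span {π} ^ ℓ) := by
    have h2 : (2 : O) ∉ IsLocalRing.maximalIdeal O := by
      intro h2m
      have hz : (2 : IsLocalRing.ResidueField O) = 0 := by
        rw [show (2 : IsLocalRing.ResidueField O) = IsLocalRing.residue O 2 from
          (map_ofNat _ 2).symm]
        exact (Ideal.Quotient.eq_zero_iff_mem).mpr h2m
      have hchar : (ringChar (IsLocalRing.ResidueField O)) ∣ 2 := by
        have h22 := (CharP.cast_eq_zero_iff (IsLocalRing.ResidueField O)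
          (ringChar (IsLocalRing.ResidueField O)) 2).mp (by exact_mod_cast hz)
        exact h22
      rcases (Nat.dvd_prime Nat.prime_two).mp hchar with h1 | h2
      · have hone : (1 : IsLocalRing.ResidueField O) = 0 := by
          have h11 := (CharP.cast_eq_zero_iff (IsLocalRing.ResidueField O)
            (ringChar (IsLocalRing.ResidueField O)) 1).mpr (by rw [h1])
          simpa using h11
        exact one_ne_zero hone
      · rw [h2] at hodd
        have hodd' := Nat.odd_iff.mp hodd
        norm_num at hodd'
    have h2O : IsUnit (2 : O) := by
      by_contra hnu
      exact h2 ((IsLocalRing.mem_maximalIdeal _).mpr hnu)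
    have h2m : IsUnit (Ideal.Quotient.mk (Ideal.span {π} ^ ℓ) (2:O)) := h2O.map _
    rwa [map_ofNat] at h2m
  have hpnu : ¬ IsUnit p := by
    intro h
    have h1 : IsUnit (p ^ ℓ) := h.pow ℓ
    rw [hH2] at h1
    exact not_isUnit_zero h1
  constructor
  · -- forward direction
    intro hreal
    obtain ⟨u, hu⟩ := isConj_iff.mp hreal
    -- matrix-level data
    have hMM : (↑A : Matrix (Fin 2) (Fin 2) (O ⧸ Ideal.span {π} ^ ℓ))
        * (↑(A⁻¹) : Matrix (Fin 2) (Fin 2) (O ⧸ Ideal.span {π} ^ ℓ)) = 1 := by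
      have h := congrArg Units.val (mul_inv_cancel A)
      simpa using h
    have hval : (↑(A⁻¹) : Matrix (Fin 2) (Fin 2) (O ⧸ Ideal.span {π} ^ ℓ))
        = (↑u : Matrix (Fin 2) (Fin 2) (O ⧸ Ideal.span {π} ^ ℓ))
          * (↑A : Matrix (Fin 2) (Fin 2) (O ⧸ Ideal.span {π} ^ ℓ))
          * (↑(u⁻¹) : Matrix (Fin 2) (Fin 2) (O ⧸ Ideal.span {π} ^ ℓ)) := by
      rw [← hu]; rfl
    have huinv : (↑(u⁻¹) : Matrix (Fin 2) (Fin 2) (O ⧸ Ideal.span {π} ^ ℓ))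
        * (↑u : Matrix (Fin 2) (Fin 2) (O ⧸ Ideal.span {π} ^ ℓ)) = 1 := by
      have h := congrArg Units.val (inv_mul_cancel u)
      simpa using h
    have hdconj : (↑(A⁻¹) : Matrix (Fin 2) (Fin 2) (O ⧸ Ideal.span {π} ^ ℓ)).det
        = (↑A : Matrix (Fin 2) (Fin 2) (O ⧸ Ideal.span {π} ^ ℓ)).det := by
      rw [hval]; exact aux_det_conj _ _ _ huinv
    have htconj : (↑(A⁻¹) : Matrix (Fin 2) (Fin 2) (O ⧸ Ideal.span {π} ^ ℓ)).trace
        = (↑A : Matrix (Fin 2) (Fin 2) (O ⧸ Ideal.span {π} ^ ℓ)).trace := by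
      rw [hval]; exact aux_trace_conj _ _ _ huinv
    have hdmul : (↑A : Matrix (Fin 2) (Fin 2) (O ⧸ Ideal.span {π} ^ ℓ)).det
        * (↑(A⁻¹) : Matrix (Fin 2) (Fin 2) (O ⧸ Ideal.span {π} ^ ℓ)).det = 1 := by
      rw [← Matrix.det_mul, hMM, Matrix.det_one]
    have hd2 : (↑A : Matrix (Fin 2) (Fin 2) (O ⧸ Ideal.span {π} ^ ℓ)).det
        * (↑A : Matrix (Fin 2) (Fin 2) (O ⧸ Ideal.span {π} ^ ℓ)).det = 1 := by
      rw [← hdconj] at hdmul ⊢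
      exact hdmul
    -- trace identity : det * trace A = trace A
    have hCH := aux_CH (↑A : Matrix (Fin 2) (Fin 2) (O ⧸ Ideal.span {π} ^ ℓ)) (↑(A⁻¹)) hMM
    have htr_eq : (↑A : Matrix (Fin 2) (Fin 2) (O ⧸ Ideal.span {π} ^ ℓ)).det
        * (↑A : Matrix (Fin 2) (Fin 2) (O ⧸ Ideal.span {π} ^ ℓ)).trace
        = (↑A : Matrix (Fin 2) (Fin 2) (O ⧸ Ideal.span {π} ^ ℓ)).trace := by
      have h5 := congrArg Matrix.trace hCH
      rw [Matrix.trace_smul, Matrix.trace_sub, Matrix.trace_smul, Matrix.trace_one, htconj]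
        at h5
      simp only [smul_eq_mul, Fintype.card_fin, Nat.cast_ofNat] at h5
      linear_combination h5
    -- t = 0 helper when det = -1
    have ht0 : (↑A : Matrix (Fin 2) (Fin 2) (O ⧸ Ideal.span {π} ^ ℓ)).det = -1 →
        (↑A : Matrix (Fin 2) (Fin 2) (O ⧸ Ideal.span {π} ^ ℓ)).trace = 0 := by
      intro hdm1
      rw [hdm1] at htr_eq
      obtain ⟨v, hv⟩ := h2u.exists_right_inv
      linear_combination (- (↑A : Matrix (Fin 2) (Fin 2) (O ⧸ Ideal.span {π} ^ ℓ)).trace) * hv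
        - v * htr_eq
    by_cases hscal : ∃ (c : O ⧸ Ideal.span {π} ^ ℓ)
        (B' : Matrix (Fin 2) (Fin 2) (O ⧸ Ideal.span {π} ^ ℓ)),
        (↑A : Matrix (Fin 2) (Fin 2) (O ⧸ Ideal.span {π} ^ ℓ)) = c • 1 + p • B'
    · -- scalar mod p: must have det = 1
      obtain ⟨c, B', hAB'⟩ := hscal
      have hd1 : (↑A : Matrix (Fin 2) (Fin 2) (O ⧸ Ideal.span {π} ^ ℓ)).det = 1 := by
        rcases aux_sq hH1 hpnu h2u _ hd2 with h | h
        · exact h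
        · exfalso
          have ht := ht0 h
          have htexp : (↑A : Matrix (Fin 2) (Fin 2) (O ⧸ Ideal.span {π} ^ ℓ)).trace
              = 2 * c + p * B'.trace := by rw [hAB', aux_trexp]
          have hdexp : (↑A : Matrix (Fin 2) (Fin 2) (O ⧸ Ideal.span {π} ^ ℓ)).det
              = c * c + p * (c * B'.trace + p * B'.det) := by rw [hAB', aux_detexp]
          obtain ⟨v, hv⟩ := h2u.exists_right_inv
          have hcp : c = p * (-(v * B'.trace)) := by
            rw [ht] at htexp
            linear_combination (-v) * htexp + (-c) * hv
          have hm1 : (-1 : O ⧸ Ideal.span {π} ^ ℓ)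
              = p * ((-(v * B'.trace)) * c + (c * B'.trace + p * B'.det)) := by
            rw [h] at hdexp
            nth_rewrite 1 [hcp] at hdexp
            linear_combination hdexp
          apply hpnu
          have hium : IsUnit (p * ((-(v * B'.trace)) * c + (c * B'.trace + p * B'.det))) := by
            rw [← hm1]; exact isUnit_one.neg
          exact isUnit_of_mul_isUnit_left hium
      -- c ≡ ± 1 mod p
      have hcsq : c * c - 1 = p * (-(c * B'.trace + p * B'.det)) := by
        have hdexp : (↑A : Matrix (Fin 2) (Fin 2) (O ⧸ Ideal.span {π} ^ ℓ)).det
            = c * c + p * (c * B'.trace + p * B'.det) := by rw [hAB', aux_detexp]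
        rw [hd1] at hdexp
        linear_combination -hdexp
      rcases hH1 (c - 1) with hcu | ⟨e, he⟩
      · -- c ≡ -1 mod p : case (d)
        obtain ⟨v, hv⟩ := hcu.exists_right_inv
        have he' : c + 1 = p * (v * (-(c * B'.trace + p * B'.det))) := by
          linear_combination (-(c+1)) * hv + v * hcsq
        have hdetneg : (↑(-A) : Matrix (Fin 2) (Fin 2) (O ⧸ Ideal.span {π} ^ ℓ)).det = 1 := by
          rw [Units.val_neg, Matrix.det_neg]
          simp [hd1]
        have hA2 : (↑(-A) : Matrix (Fin 2) (Fin 2) (O ⧸ Ideal.span {π} ^ ℓ))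
            = 1 + p • ((-(v * (-(c * B'.trace + p * B'.det)))) • 1 - B') := by
          rw [Units.val_neg, hAB']
          ext ii jj
          fin_cases ii <;> fin_cases jj <;>
            simp [Matrix.add_apply, Matrix.smul_apply, Matrix.one_apply, Matrix.sub_apply,
              Matrix.neg_apply] <;>
            first
            | linear_combination -he'
            | linear_combination he'
            | ring
        obtain ⟨g, i, α, hi1, hiℓ, hE⟩ :=
          aux_main_c hH1 hpnu h2u ℓ hℓ hH2 (-A) hdetneg _ hA2
        have hgl : g * (-A) * g⁻¹ = -(g * A * g⁻¹) := by rw [mul_neg, neg_mul]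
        have hvalneg : (↑(g * A * g⁻¹) : Matrix (Fin 2) (Fin 2) (O ⧸ Ideal.span {π} ^ ℓ))
            = -(1 + p ^ i • !![0, α; 1, p ^ i * α]) := by
          have h6 : (↑(-(g * A * g⁻¹)) : Matrix (Fin 2) (Fin 2) (O ⧸ Ideal.span {π} ^ ℓ))
              = 1 + p ^ i • !![0, α; 1, p ^ i * α] := by rw [← hgl]; exact hE
          rw [Units.val_neg] at h6
          exact neg_eq_iff_eq_neg.mp h6
        have kk : (!![-1, 0; 0, 1] : Matrix (Fin 2) (Fin 2) (O ⧸ Ideal.span {π} ^ ℓ))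
            * !![-1, 0; 0, 1] = 1 := by
          ext ii jj
          fin_cases ii <;> fin_cases jj <;>
            simp [Matrix.mul_apply, Fin.sum_univ_two, Matrix.one_apply]
        set K : GL (Fin 2) (O ⧸ Ideal.span {π} ^ ℓ) := ⟨!![-1, 0; 0, 1], !![-1, 0; 0, 1], kk, kk⟩
          with hK
        refine ⟨K * g, Or.inr (Or.inr (Or.inr ⟨i, hi1, hiℓ, α, ?_⟩))⟩
        have hKg : (K * g) * A * (K * g)⁻¹ = K * (g * A * g⁻¹) * K⁻¹ := by group
        rw [hKg]
        have hKval : (↑(K * (g * A * g⁻¹) * K⁻¹) : Matrix (Fin 2) (Fin 2) (O ⧸ Ideal.span {π} ^ ℓ))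
            = !![-1, 0; 0, 1]
              * (↑(g * A * g⁻¹) : Matrix (Fin 2) (Fin 2) (O ⧸ Ideal.span {π} ^ ℓ))
              * !![-1, 0; 0, 1] := rfl
        have hvlit : (↑(g * A * g⁻¹) : Matrix (Fin 2) (Fin 2) (O ⧸ Ideal.span {π} ^ ℓ))
            = !![-1, -(p ^ i * α); -(p ^ i), -(1 + p ^ i * (p ^ i * α))] := by
          rw [hvalneg]
          ext ii jj
          fin_cases ii <;> fin_cases jj <;>
            simp [Matrix.add_apply, Matrix.smul_apply, Matrix.one_apply, Matrix.neg_apply]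
        rw [hKval, hvlit, Matrix.mul_fin_two, Matrix.mul_fin_two]
        ext ii jj
        fin_cases ii <;> fin_cases jj <;>
          simp [Matrix.add_apply, Matrix.smul_apply, Matrix.one_apply, Matrix.neg_apply] <;>
          ring
      · -- c ≡ 1 mod p : case (c)
        have hA2 : (↑A : Matrix (Fin 2) (Fin 2) (O ⧸ Ideal.span {π} ^ ℓ))
            = 1 + p • (e • 1 + B') := by
          rw [hAB']
          have hce : c = 1 + p * e := by linear_combination he
          rw [hce]
          ext ii jj
          fin_cases ii <;> fin_cases jj <;>
            simp [Matrix.add_apply, Matrix.smul_apply, Matrix.one_apply] <;> ring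
        obtain ⟨g, i, α, hi1, hiℓ, hE⟩ :=
          aux_main_c hH1 hpnu h2u ℓ hℓ hH2 A hd1 _ hA2
        exact ⟨g, Or.inr (Or.inr (Or.inl ⟨i, hi1, hiℓ, α, hE⟩))⟩
    · -- non-scalar: cyclic, cases (a) / (b)
      obtain ⟨P, Q, hPQ, hQP, hcomp⟩ := aux_cyc hH1 hpnu (↑A) hscal
      refine ⟨⟨Q, P, hQP, hPQ⟩, ?_⟩
      have hEval : (↑((⟨Q, P, hQP, hPQ⟩ : GL (Fin 2) (O ⧸ Ideal.span {π} ^ ℓ)) * A *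
          (⟨Q, P, hQP, hPQ⟩ : GL (Fin 2) (O ⧸ Ideal.span {π} ^ ℓ))⁻¹)
          : Matrix (Fin 2) (Fin 2) (O ⧸ Ideal.span {π} ^ ℓ))
          = Q * (↑A : Matrix (Fin 2) (Fin 2) (O ⧸ Ideal.span {π} ^ ℓ)) * P := rfl
      rcases aux_sq hH1 hpnu h2u _ hd2 with h | h
      · right; left
        exact ⟨(↑A : Matrix (Fin 2) (Fin 2) (O ⧸ Ideal.span {π} ^ ℓ)).trace,
          by rw [hEval, hcomp, h]⟩
      · left
        rw [hEval, hcomp, h, ht0 h]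
        norm_num
  · -- backward direction
    rintro ⟨g, hcase | ⟨β, hb⟩ | ⟨i, hi1, hiℓ, α, hc⟩ | ⟨i, hi1, hiℓ, α, hd⟩⟩
    · refine aux_back A g !![0, 1; 1, 0] !![0, 1; 1, 0] hcase ?_ ?_ <;>
        · ext ii jj
          fin_cases ii <;> fin_cases jj <;>
            simp [Matrix.mul_apply, Fin.sum_univ_two, Matrix.one_apply]
    · refine aux_back A g !![1, β; 0, -1] !![0, -1; 1, β] hb ?_ ?_
      · ext ii jj
        fin_cases ii <;> fin_cases jj <;>
          simp [Matrix.mul_apply, Fin.sum_univ_two, Matrix.one_apply]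
      · ext ii jj
        fin_cases ii <;> fin_cases jj <;>
          simp [Matrix.mul_apply, Fin.sum_univ_two, Matrix.one_apply] <;> ring
    · have hlit : (1 + p ^ i • !![0, α; 1, p ^ i * α]
            : Matrix (Fin 2) (Fin 2) (O ⧸ Ideal.span {π} ^ ℓ))
          = !![1, p ^ i * α; p ^ i, 1 + p ^ i * (p ^ i * α)] := by
        ext ii jj
        fin_cases ii <;> fin_cases jj <;>
          simp [Matrix.add_apply, Matrix.smul_apply, Matrix.one_apply]
      refine aux_back A g !![1, p ^ i * α; 0, -1]
        !![1, p ^ i * α; p ^ i, 1 + p ^ i * (p ^ i * α)] (hc.trans hlit) ?_ ?_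
      · rw [Matrix.mul_fin_two]
        ext ii jj
        fin_cases ii <;> fin_cases jj <;>
          simp [Matrix.one_apply] <;> ring
      · rw [Matrix.mul_fin_two, Matrix.mul_fin_two, Matrix.mul_fin_two]
        ext ii jj
        fin_cases ii <;> fin_cases jj <;>
          simp [Matrix.one_apply] <;> ring
    · have hlit : (-1 + p ^ i • !![0, α; 1, -(p ^ i * α)]
            : Matrix (Fin 2) (Fin 2) (O ⧸ Ideal.span {π} ^ ℓ))
          = !![-1, p ^ i * α; p ^ i, -1 + p ^ i * (-(p ^ i * α))] := by
        ext ii jj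
        fin_cases ii <;> fin_cases jj <;>
          simp [Matrix.add_apply, Matrix.smul_apply, Matrix.one_apply, Matrix.neg_apply]
      refine aux_back A g !![1, -(p ^ i * α); 0, -1]
        !![-1, p ^ i * α; p ^ i, -1 + p ^ i * (-(p ^ i * α))] (hd.trans hlit) ?_ ?_
      · rw [Matrix.mul_fin_two]
        ext ii jj
        fin_cases ii <;> fin_cases jj <;>
          simp [Matrix.one_apply] <;> ring
      · rw [Matrix.mul_fin_two, Matrix.mul_fin_two, Matrix.mul_fin_two]
        ext ii jj
        fin_cases ii <;> fin_cases jj <;>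
          simp [Matrix.one_apply] <;> ring
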